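/- For nonnegative integers i ≥ j, the Bernoulli polynomials satisfy C(i,j) B_{i-j}(x) = Σ_{k=j}^{i} (i/k) R₂(i-1, k-1, x) s(k, j), where R₂(m,k,x) denotes Carlitz's weighted Stirling numbers of the second kind and s(k,j) the signed Stirling numbers of the first kind. -/

import Mathlib

open Finset PowerSeries

/-- Carlitz's weighted Stirling numbers of the second kind `R₂(m,k,x)`, defined by
`(1/k!) e^{xt}(e^t-1)^k = ∑_{m≥0} R₂(m,k,x) t^m/m!`. -/
noncomputable def R2 (m k : ℕ) (x : ℂ) : ℂ :=
  (Nat.factorial m : ℂ) / (Nat.factorial k : ℂ) *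
    PowerSeries.coeff (R := ℂ) m
      (PowerSeries.rescale x (PowerSeries.exp ℂ) * (PowerSeries.exp ℂ - 1) ^ k)

/-- The signed Stirling numbers of the first kind, defined by
`x(x-1)⋯(x-n+1) = ∑_k s(n,k) x^k`. -/
def s1 : ℕ → ℕ → ℤ
  | 0, 0 => 1
  | 0, _ + 1 => 0
  | n + 1, 0 => -(n : ℤ) * s1 n 0
  | n + 1, k + 1 => s1 n k - (n : ℤ) * s1 n (k + 1)

/-- Stirling numbers of the second kind. -/
def St : ℕ → ℕ → ℕ
  | 0, 0 => 1
  | 0, _ + 1 => 0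
  | _ + 1, 0 => 0
  | m + 1, k + 1 => (k + 1) * St m (k + 1) + St m k

lemma St_eq_zero : ∀ {m k : ℕ}, m < k → St m k = 0 := by
  intro m
  induction m with
  | zero => intro k hk; match k, hk with | k+1, _ => rfl
  | succ m ih =>
    intro k hk
    match k, hk with
    | k+1, hk =>
      show (k + 1) * St m (k + 1) + St m k = 0
      rw [ih (by omega), ih (by omega)]; simp

lemma s1_eq_zero : ∀ {k j : ℕ}, k < j → s1 k j = 0 := by
  intro k
  induction k with
  | zero => intro j hj; match j, hj with | j+1, _ => rfl
  | succ k ih =>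
    intro j hj
    match j, hj with
    | j+1, hj =>
      show s1 k j - (k:ℤ) * s1 k (j+1) = 0
      rw [ih (by omega), ih (by omega)]; ring

lemma orth : ∀ (m j : ℕ), ∑ k ∈ range (m+1), s1 k j * (St m k : ℤ) = if j = m then 1 else 0 := by
  intro m
  induction m with
  | zero =>
    intro j
    cases j with
    | zero => simp [s1, St]
    | succ j => simp [s1, St]
  | succ m ih =>
    intro j
    rw [Finset.sum_range_succ']
    have hSt0 : St (m+1) 0 = 0 := rfl
    simp only [hSt0, Nat.cast_zero, mul_zero, add_zero]
    have hstep : ∀ k, (St (m+1) (k+1) : ℤ) = (k+1) * St m (k+1) + St m k := by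
      intro k; push_cast [St]; ring
    have hA : ∑ k ∈ range (m+1), s1 (k+1) j * ((k+1) * (St m (k+1) : ℤ))
        = ∑ k ∈ range (m+1), (k : ℤ) * s1 k j * St m k := by
      have h1 : ∑ k ∈ range (m+2), (k : ℤ) * s1 k j * St m k
          = ∑ k ∈ range (m+1), s1 (k+1) j * ((k+1) * (St m (k+1) : ℤ)) := by
        rw [Finset.sum_range_succ']
        simp only [Nat.cast_zero, zero_mul, mul_zero, add_zero]
        apply Finset.sum_congr rfl
        intro k _; push_cast; ring
      have h2 : ∑ k ∈ range (m+2), (k : ℤ) * s1 k j * St m k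
          = ∑ k ∈ range (m+1), (k : ℤ) * s1 k j * St m k := by
        rw [Finset.sum_range_succ, St_eq_zero (by omega)]
        simp
      rw [← h1, h2]
    simp only [hstep]
    have expand : ∑ k ∈ range (m+1), s1 (k+1) j * ((k+1) * (St m (k+1) : ℤ) + St m k)
        = (∑ k ∈ range (m+1), s1 (k+1) j * ((k+1) * (St m (k+1) : ℤ)))
          + ∑ k ∈ range (m+1), s1 (k+1) j * St m k := by
      rw [← Finset.sum_add_distrib]; apply Finset.sum_congr rfl; intro k _; ring
    rw [expand, hA]
    cases j with
    | zero =>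
      have : ∀ k : ℕ, s1 (k+1) 0 = -(k:ℤ) * s1 k 0 := fun k => rfl
      simp only [this]
      have : (∑ k ∈ range (m+1), (k : ℤ) * s1 k 0 * St m k)
          + ∑ k ∈ range (m+1), (-(k:ℤ) * s1 k 0) * St m k = 0 := by
        rw [← Finset.sum_add_distrib]
        apply Finset.sum_eq_zero; intro k _; ring
      rw [this]; simp
    | succ jj =>
      have hs : ∀ k : ℕ, s1 (k+1) (jj+1) = s1 k jj - (k:ℤ) * s1 k (jj+1) := fun k => rfl
      simp only [hs]
      have : (∑ k ∈ range (m+1), (k : ℤ) * s1 k (jj+1) * St m k)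
          + ∑ k ∈ range (m+1), (s1 k jj - (k:ℤ) * s1 k (jj+1)) * St m k
          = ∑ k ∈ range (m+1), s1 k jj * St m k := by
        rw [← Finset.sum_add_distrib]
        apply Finset.sum_congr rfl; intro k _; ring
      rw [this, ih jj]
      by_cases h : jj = m <;> simp [h]

lemma derivExpPS : d⁄dX ℂ (exp ℂ) = exp ℂ := by
  ext n
  rw [PowerSeries.coeff_derivative, coeff_exp, coeff_exp, Nat.factorial_succ]
  have h1 : ((n:ℂ)+1) ≠ 0 := Nat.cast_add_one_ne_zero n
  have h2 : (n.factorial : ℂ) ≠ 0 := Nat.cast_ne_zero.2 n.factorial_ne_zero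
  push_cast
  field_simp

lemma coeff_expSub1_pow : ∀ (m k : ℕ), coeff (R := ℂ) m ((exp ℂ - 1)^k)
    = (St m k : ℂ) * k.factorial / m.factorial := by
  intro m
  induction m with
  | zero =>
    intro k
    cases k with
    | zero => simp [St]
    | succ k =>
      have : St 0 (k+1) = 0 := rfl
      simp [coeff_zero_eq_constantCoeff, map_pow, zero_pow, this]
  | succ m ih =>
    intro k
    cases k with
    | zero =>
      simp [St, PowerSeries.coeff_one]
    | succ k =>
      have hd : d⁄dX ℂ ((exp ℂ - 1)^(k+1))
          = (k+1 : ℂ⟦X⟧) * ((exp ℂ - 1)^(k+1) + (exp ℂ - 1)^k) := by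
        rw [Derivation.leibniz_pow]
        have h1 : d⁄dX ℂ (exp ℂ - 1) = exp ℂ := by
          rw [map_sub, derivExpPS, Derivation.map_one_eq_zero, sub_zero]
        rw [h1]
        simp only [Nat.add_sub_cancel, nsmul_eq_mul, smul_eq_mul]
        push_cast
        ring
      have hc := congrArg (coeff (R := ℂ) m) hd
      rw [PowerSeries.coeff_derivative] at hc
      have hnc : coeff (R := ℂ) m ((k+1 : ℂ⟦X⟧) * ((exp ℂ - 1)^(k+1) + (exp ℂ - 1)^k))
          = (k+1 : ℂ) * (coeff (R := ℂ) m ((exp ℂ - 1)^(k+1)) + coeff (R := ℂ) m ((exp ℂ - 1)^k)) := by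
        have : ((k+1 : ℂ⟦X⟧)) = PowerSeries.C (R := ℂ) ((k:ℂ)+1) := by push_cast; simp
        rw [this, coeff_C_mul, map_add]
      rw [hnc, ih, ih] at hc
      have h1 : ((m:ℂ)+1) ≠ 0 := Nat.cast_add_one_ne_zero m
      have h2 : (m.factorial : ℂ) ≠ 0 := Nat.cast_ne_zero.2 m.factorial_ne_zero
      have hSt : (St (m+1) (k+1) : ℂ) = ((k:ℂ)+1) * St m (k+1) + St m k := by
        push_cast [St]; ring
      have key : coeff (R := ℂ) (m+1) ((exp ℂ - 1)^(k+1))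
          = ((k+1:ℂ) * ((St m (k+1) : ℂ) * (k+1).factorial / m.factorial
              + (St m k : ℂ) * k.factorial / m.factorial)) / ((m:ℂ)+1) := by
        field_simp at hc ⊢
        linear_combination hc
      rw [key, hSt, Nat.factorial_succ (m), Nat.factorial_succ k]
      push_cast
      field_simp

/-- The unit power series with `exp - 1 = X * Uu`. -/
noncomputable def Uu : ℂ⟦X⟧ := PowerSeries.mk fun n => ((n+1).factorial : ℂ)⁻¹

lemma expSub1_eq : exp ℂ - 1 = X * Uu := by
  ext n
  cases n with
  | zero =>
    simp [coeff_zero_eq_constantCoeff, constantCoeff_exp]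
  | succ n =>
    rw [PowerSeries.coeff_succ_X_mul, map_sub, coeff_exp]
    simp only [Uu, PowerSeries.coeff_mk, PowerSeries.coeff_one, Nat.succ_ne_zero, if_false,
      sub_zero]
    rw [eq_comm, inv_eq_iff_eq_inv, eq_comm]
    simp [Rat.cast_def]

lemma Uu_const : constantCoeff (R := ℂ) Uu = 1 := by
  simp [Uu, PowerSeries.constantCoeff_mk]

lemma coeff_mul_congr {n : ℕ} {f g : ℂ⟦X⟧} (h : ∀ m ≤ n, coeff (R := ℂ) m f = coeff (R := ℂ) m g)
    (p : ℂ⟦X⟧) : ∀ m ≤ n, coeff (R := ℂ) m (f * p) = coeff (R := ℂ) m (g * p) := by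
  intro m hm
  rw [PowerSeries.coeff_mul, PowerSeries.coeff_mul]
  refine Finset.sum_congr rfl fun ab hab => ?_
  rw [h ab.1 (le_trans (Finset.HasAntidiagonal.antidiagonal.fst_le hab) hm)]

lemma fact_cast (n : ℕ) (hn : 1 ≤ n) :
    ((n.factorial : ℂ)) = (n : ℂ) * ((n-1).factorial : ℂ) := by
  obtain ⟨m, rfl⟩ := Nat.exists_eq_add_of_le hn
  rw [Nat.add_comm 1 m, Nat.add_sub_cancel, Nat.factorial_succ]
  push_cast
  ring

theorem bernoulli_eq_weightedStirling_sum (i j : ℕ) (hj : 1 ≤ j) (hij : j ≤ i) (x : ℂ) :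
    (i.choose j : ℂ) * Polynomial.aeval x (Polynomial.bernoulli (i - j)) =
      ∑ k ∈ Finset.Icc j i, (i : ℂ) / (k : ℂ) * R2 (i - 1) (k - 1) x * (s1 k j : ℂ) := by
  have hi : 1 ≤ i := le_trans hj hij
  set E : ℂ⟦X⟧ := rescale x (exp ℂ) with hE
  set D : ℂ⟦X⟧ := exp ℂ - 1 with hD
  set mkB : ℂ⟦X⟧ := PowerSeries.mk fun n =>
    Polynomial.aeval x ((1/(n.factorial : ℚ)) • Polynomial.bernoulli n) with hmkB
  have hBgf : mkB * D = X * E := Polynomial.bernoulli_generating_function x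
  set F : ℂ⟦X⟧ := ∑ k ∈ Icc j i, PowerSeries.C (R := ℂ) ((s1 k j : ℂ)/(k.factorial : ℂ)) * D^(k-1)
    with hF
  set G : ℂ⟦X⟧ := ∑ k ∈ Icc j i, PowerSeries.C (R := ℂ) ((s1 k j : ℂ)/(k.factorial : ℂ)) * D^k
    with hG
  have hFD : F * D = G := by
    rw [hF, hG, Finset.sum_mul]
    apply Finset.sum_congr rfl
    intro k hk
    have hk1 : 1 ≤ k := le_trans hj (Finset.mem_Icc.1 hk).1
    rw [mul_assoc, ← pow_succ, Nat.sub_add_cancel hk1]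
  have hGc : ∀ m ≤ i, coeff (R := ℂ) m G
      = coeff (R := ℂ) m (PowerSeries.C (R := ℂ) ((j.factorial : ℂ))⁻¹ * X^j) := by
    intro m hm
    have hcG : coeff (R := ℂ) m G
        = (m.factorial : ℂ)⁻¹ * ∑ k ∈ Icc j i, (s1 k j : ℂ) * (St m k : ℂ) := by
      rw [hG, map_sum, Finset.mul_sum]
      apply Finset.sum_congr rfl
      intro k hk
      rw [coeff_C_mul, hD, coeff_expSub1_pow]
      have h2 : (m.factorial : ℂ) ≠ 0 := Nat.cast_ne_zero.2 m.factorial_ne_zero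
      have h3 : (k.factorial : ℂ) ≠ 0 := Nat.cast_ne_zero.2 k.factorial_ne_zero
      field_simp
    have h1 : ∑ k ∈ Icc j i, (s1 k j : ℂ) * (St m k : ℂ)
        = ∑ k ∈ range (i+1), (s1 k j : ℂ) * (St m k : ℂ) := by
      apply Finset.sum_subset
      · intro k hk
        rw [Finset.mem_range]
        exact Nat.lt_succ_of_le (Finset.mem_Icc.1 hk).2
      · intro k hk hk2
        have : k < j := by
          rw [Finset.mem_range] at hk
          rw [Finset.mem_Icc] at hk2
          omega
        rw [s1_eq_zero this]; simp
    have h2 : ∑ k ∈ range (i+1), (s1 k j : ℂ) * (St m k : ℂ)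
        = ∑ k ∈ range (m+1), (s1 k j : ℂ) * (St m k : ℂ) := by
      symm
      apply Finset.sum_subset
      · intro k hk
        rw [Finset.mem_range] at *
        omega
      · intro k hk hk2
        have : m < k := by
          rw [Finset.mem_range] at hk hk2
          omega
        rw [St_eq_zero this]; simp
    have h3 : ∑ k ∈ range (m+1), (s1 k j : ℂ) * (St m k : ℂ)
        = if j = m then 1 else 0 := by
      have ho := orth m j
      have := congrArg (fun z : ℤ => (z : ℂ)) ho
      push_cast at this
      rw [← this]
    have h4 : coeff (R := ℂ) m (PowerSeries.C (R := ℂ) ((j.factorial : ℂ))⁻¹ * X^j)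
        = if m = j then ((j.factorial : ℂ))⁻¹ else 0 := by
      rw [coeff_C_mul, PowerSeries.coeff_X_pow]
      split <;> simp
    rw [hcG, h1, h2, h3, h4]
    by_cases h : j = m
    · subst h; simp
    · have : ¬ (m = j) := fun hh => h hh.symm
      simp [h, this]
  set A : ℂ⟦X⟧ := E * F with hA
  set B : ℂ⟦X⟧ := PowerSeries.C (R := ℂ) ((j.factorial : ℂ))⁻¹ * X^(j-1) * mkB with hB
  have hAD : ∀ m ≤ i, coeff (R := ℂ) m (A * D) = coeff (R := ℂ) m (B * D) := by
    intro m hm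
    have e1 : A * D = G * E := by rw [hA, mul_assoc, hFD, mul_comm]
    have e2 : B * D = (PowerSeries.C (R := ℂ) ((j.factorial : ℂ))⁻¹ * X^j) * E := by
      rw [hB, mul_assoc, hBgf, ← mul_assoc, mul_assoc _ _ X, ← pow_succ,
        Nat.sub_add_cancel hj, mul_assoc]
    rw [e1, e2]
    exact coeff_mul_congr hGc E m hm
  have hAU : ∀ m ≤ i - 1, coeff (R := ℂ) m (A * Uu) = coeff (R := ℂ) m (B * Uu) := by
    intro m hm
    have h1 : A * D = (A * Uu) * X := by rw [hD, expSub1_eq]; ring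
    have h2 : B * D = (B * Uu) * X := by rw [hD, expSub1_eq]; ring
    have h3 := hAD (m+1) (by omega)
    rw [h1, h2, PowerSeries.coeff_succ_mul_X, PowerSeries.coeff_succ_mul_X] at h3
    exact h3
  have hUinv : Uu * Uu⁻¹ = 1 :=
    PowerSeries.mul_inv_cancel _ (by rw [Uu_const]; exact one_ne_zero)
  have hAB : coeff (R := ℂ) (i-1) A = coeff (R := ℂ) (i-1) B := by
    have h1 : A = (A * Uu) * Uu⁻¹ := by rw [mul_assoc, hUinv, mul_one]
    have h2 : B = (B * Uu) * Uu⁻¹ := by rw [mul_assoc, hUinv, mul_one]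
    rw [h1, h2]
    exact coeff_mul_congr hAU (Uu⁻¹) (i-1) le_rfl
  have hcB : coeff (R := ℂ) (i-1) B
      = (j.factorial : ℂ)⁻¹ * ((i-j).factorial : ℂ)⁻¹
        * Polynomial.aeval x (Polynomial.bernoulli (i - j)) := by
    rw [hB, mul_assoc, coeff_C_mul]
    have hidx : i - 1 = (i - j) + (j - 1) := by omega
    rw [hidx, PowerSeries.coeff_X_pow_mul, hmkB, PowerSeries.coeff_mk]
    rw [map_smul, Rat.smul_def]
    push_cast
    ring
  have hcA : ∑ k ∈ Finset.Icc j i, (i : ℂ) / (k : ℂ) * R2 (i - 1) (k - 1) x * (s1 k j : ℂ)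
      = (i.factorial : ℂ) * coeff (R := ℂ) (i-1) A := by
    rw [hA, hF, Finset.mul_sum, map_sum, Finset.mul_sum]
    apply Finset.sum_congr rfl
    intro k hk
    obtain ⟨hk1, hki⟩ := Finset.mem_Icc.1 hk
    have hk1' : 1 ≤ k := le_trans hj hk1
    unfold R2
    rw [← hE, ← hD]
    have e3 : E * (PowerSeries.C (R := ℂ) ((s1 k j : ℂ)/(k.factorial : ℂ)) * D^(k-1))
        = PowerSeries.C (R := ℂ) ((s1 k j : ℂ)/(k.factorial : ℂ)) * (E * D^(k-1)) := by ring
    rw [e3, coeff_C_mul]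
    have hif : (i.factorial : ℂ) = (i : ℂ) * ((i-1).factorial : ℂ) := fact_cast i hi
    have hkf : (k.factorial : ℂ) = (k : ℂ) * ((k-1).factorial : ℂ) := fact_cast k hk1'
    have hk0 : (k : ℂ) ≠ 0 := Nat.cast_ne_zero.2 (by omega)
    have hkf0 : ((k-1).factorial : ℂ) ≠ 0 := Nat.cast_ne_zero.2 (Nat.factorial_ne_zero _)
    have hif0 : ((i-1).factorial : ℂ) ≠ 0 := Nat.cast_ne_zero.2 (Nat.factorial_ne_zero _)
    rw [hif, hkf]
    field_simp
  rw [hcA, hAB, hcB]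
  have hchoose : (i.choose j : ℂ) * (j.factorial : ℂ) * ((i-j).factorial : ℂ)
      = (i.factorial : ℂ) := by
    exact_mod_cast congrArg (fun n : ℕ => (n : ℂ)) (Nat.choose_mul_factorial_mul_factorial hij)
  have hjf0 : (j.factorial : ℂ) ≠ 0 := Nat.cast_ne_zero.2 (Nat.factorial_ne_zero _)
  have hijf0 : ((i-j).factorial : ℂ) ≠ 0 := Nat.cast_ne_zero.2 (Nat.factorial_ne_zero _)
  field_simp
  linear_combination Polynomial.aeval x (Polynomial.bernoulli (i - j)) * hchoose
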